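/- arXiv:1312.5037 — 2 statements merged into one kernel-verified Lean document; each statement's English description precedes it below -/
import Mathlib

section
/- Let C and D be monoidal categories, A a Schrödinger object for C, and F: C → D a monoidal equivalence. Then Z(F)(A) is a Schrödinger object for D, where Z(F): Z(C) → Z(D) is the braided monoidal equivalence induced by F on the Drinfel'd centers. -/
open CategoryTheory MonoidalCategory

universe v u v' u'

variable {C : Type u} [Category.{v} C] [MonoidalCategory C]

/-- An object `A` of the Drinfel'd center `Z(C)` is a *Schrödinger object* for the monoidal
category `C` if the functor `Hom_C(Π(−), 𝟙) : Z(C)ᵒᵖ ⥤ Type` is representable by `A`. -/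
def IsSchrodingerObject (A : Center C) : Prop :=
  Nonempty ((Center.forget C).op ⋙ yoneda.obj (𝟙_ C) ≅ yoneda.obj A)

/-- If `A` is a Schrödinger object for `C` and `F : C ⥤ D` is a monoidal equivalence, then
`Z(F)(A)` is a Schrödinger object for `D`, where `Z(F) : Z(C) ⥤ Z(D)` is the (braided monoidal)
equivalence induced by `F` on the Drinfel'd centers, i.e. the monoidal equivalence satisfying
`Π_D ∘ Z(F) = F ∘ Π_C`. -/
theorem isSchrodingerObject_of_monoidalEquivalence
    {D : Type u'} [Category.{v'} D] [MonoidalCategory D]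
    (F : C ⥤ D) [F.Monoidal] [F.IsEquivalence]
    (ZF : Center C ⥤ Center D) [ZF.Monoidal] [ZF.IsEquivalence]
    (hZF : ZF ⋙ Center.forget D = Center.forget C ⋙ F)
    (A : Center C) (hA : IsSchrodingerObject A) :
    IsSchrodingerObject (ZF.obj A) := by
  obtain ⟨i⟩ := hA
  -- representability of the C-side functor
  have hRep : ((Center.forget C).op ⋙ yoneda.obj (𝟙_ C)).RepresentableBy A :=
    Functor.representableByEquiv.symm i.symm
  let e : Center C ≌ Center D := ZF.asEquivalence
  let ffF : F.FullyFaithful := .ofFullyFaithful F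
  -- comparison iso on objects
  let i1 : ∀ X : Center D,
      F.obj ((Center.forget C).obj (e.inverse.obj X)) ≅ (Center.forget D).obj X := fun X =>
    eqToIso (Functor.congr_obj hZF.symm (e.inverse.obj X)) ≪≫
      (Center.forget D).mapIso (e.counitIso.app X)
  have key : ((Center.forget D).op ⋙ yoneda.obj (𝟙_ D)).RepresentableBy (ZF.obj A) :=
    { homEquiv := fun {X} =>
        ((e.symm.toAdjunction.homEquiv X A).symm.trans hRep.homEquiv).trans
          (ffF.homEquiv.trans (Iso.homCongr (i1 X) (Functor.Monoidal.εIso F).symm))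
      homEquiv_comp := fun {X X'} f g => by
        dsimp [Iso.homCongr]
        change (i1 X).inv ≫ F.map (hRep.homEquiv ((e.symm.toAdjunction.homEquiv X A).symm (f ≫ g))) ≫
            (Functor.Monoidal.εIso F).inv = (Center.forget D).map f ≫ ((i1 X').inv ≫
            F.map (hRep.homEquiv ((e.symm.toAdjunction.homEquiv X' A).symm g)) ≫
            (Functor.Monoidal.εIso F).inv)
        have h1 := Adjunction.homEquiv_naturality_left_symm (e.symm.toAdjunction) (Y := A) f g
        erw [h1, hRep.homEquiv_comp]
        dsimp [i1]
        simp only [Category.assoc]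
        erw [F.map_comp]
        have h2 := Functor.congr_hom hZF.symm (e.inverse.map f)
        dsimp at h2
        erw [h2]
        simp only [Category.assoc, eqToHom_trans_assoc, eqToHom_refl, Category.id_comp]
        have h3 := congrArg Center.Hom.f (e.counitIso.inv.naturality f)
        simp only [Functor.comp_map, Functor.id_map, Center.comp_f] at h3
        erw [reassoc_of% h3]; rfl }
  exact ⟨key.toIso.symm⟩
end

section
/- Let (C, c) be a left rigid braided monoidal category with chosen left duals, and let j_{X,Y}: Y* ⊗ X* → (X ⊗ Y)* denote the canonical isomorphism. Then for any morphism f: X ⊗ Y → X ⊗ Z, the right partial braided trace of j_{X,Y}^{-1} ∘ ᵗf ∘ j_{X,Z} on X* equals the left transpose of the left partial braided trace of f on X computed with respect to the mirror braiding c̄ (where c̄_{X,Y} := c_{Y,X}^{-1}). -/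
open CategoryTheory MonoidalCategory

variable {C : Type*} [Category C] [MonoidalCategory C] [BraidedCategory C]
variable [RightRigidCategory C]

/-- The left partial braided trace of `f : X ⊗ Y ⟶ X ⊗ Z` on `X`, computed with respect to the
*mirror* braiding `c̄` (where `c̄_{X,Y} = c_{Y,X}⁻¹`, so `c̄_{Xᘁ,X}⁻¹ = c_{X,Xᘁ}`). -/
noncomputable def lptraceMirror (X : C) [HasRightDual X] {Y Z : C} (f : X ⊗ Y ⟶ X ⊗ Z) :
    Y ⟶ Z :=
  (λ_ Y).inv ≫ (η_ X (Xᘁ) ▷ Y) ≫ ((β_ X (Xᘁ)).hom ▷ Y) ≫ (α_ (Xᘁ) X Y).hom ≫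
    ((Xᘁ) ◁ f) ≫ (α_ (Xᘁ) X Z).inv ≫ (ε_ X (Xᘁ) ▷ Z) ≫ (λ_ Z).hom

/-- The right partial braided trace of `g : Y ⊗ X ⟶ Z ⊗ X` on `X`:
`Y ≅ Y ⊗ 𝟙 → Y ⊗ (X ⊗ Xᘁ) → (Y ⊗ X) ⊗ Xᘁ → (Z ⊗ X) ⊗ Xᘁ → Z ⊗ (X ⊗ Xᘁ) →
Z ⊗ (Xᘁ ⊗ X) → Z ⊗ 𝟙 → Z`, using `c_{X,Xᘁ}`. -/
noncomputable def rptrace (X : C) [HasRightDual X] {Y Z : C} (g : Y ⊗ X ⟶ Z ⊗ X) : Y ⟶ Z :=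
  (ρ_ Y).inv ≫ (Y ◁ η_ X (Xᘁ)) ≫ (α_ Y X (Xᘁ)).inv ≫ (g ▷ (Xᘁ)) ≫ (α_ Z X (Xᘁ)).hom ≫
    (Z ◁ (β_ X (Xᘁ)).hom) ≫ (Z ◁ ε_ X (Xᘁ)) ≫ (ρ_ Z).hom

namespace RptraceAux

/-- Comparison morphism between two "left dual" data on `V`. -/
noncomputable def cmp {D₁ D₂ V : C} (η₂ : 𝟙_ C ⟶ D₂ ⊗ V) (ε₁ : V ⊗ D₁ ⟶ 𝟙_ C) : D₁ ⟶ D₂ :=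
  (λ_ D₁).inv ≫ (η₂ ▷ D₁) ≫ (α_ D₂ V D₁).hom ≫ (D₂ ◁ ε₁) ≫ (ρ_ D₂).hom

theorem cmp_coev {D₁ D₂ V : C} (η₁ : 𝟙_ C ⟶ D₁ ⊗ V) (ε₁ : V ⊗ D₁ ⟶ 𝟙_ C)
    (η₂ : 𝟙_ C ⟶ D₂ ⊗ V)
    (z1 : V ◁ η₁ ≫ (α_ V D₁ V).inv ≫ ε₁ ▷ V = (ρ_ V).hom ≫ (λ_ V).inv) :
    η₁ ≫ (cmp η₂ ε₁ ▷ V) = η₂ := by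
  dsimp only [cmp]
  calc η₁ ≫ (((λ_ D₁).inv ≫ (η₂ ▷ D₁) ≫ (α_ D₂ V D₁).hom ≫ (D₂ ◁ ε₁) ≫ (ρ_ D₂).hom) ▷ V)
      = 𝟙 _ ⊗≫ ((𝟙_ C) ◁ η₁ ≫ η₂ ▷ (D₁ ⊗ V)) ⊗≫ ((D₂ ◁ ε₁) ▷ V) ⊗≫ 𝟙 _ := by
        monoidal
    _ = 𝟙 _ ⊗≫ (η₂ ▷ (𝟙_ C) ≫ (D₂ ⊗ V) ◁ η₁) ⊗≫ ((D₂ ◁ ε₁) ▷ V) ⊗≫ 𝟙 _ := by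
        rw [whisker_exchange]
    _ = 𝟙 _ ⊗≫ η₂ ⊗≫ (D₂ ◁ (V ◁ η₁ ≫ (α_ V D₁ V).inv ≫ ε₁ ▷ V)) ⊗≫ 𝟙 _ := by
        monoidal
    _ = 𝟙 _ ⊗≫ η₂ ⊗≫ (D₂ ◁ ((ρ_ V).hom ≫ (λ_ V).inv)) ⊗≫ 𝟙 _ := by rw [z1]
    _ = η₂ := by monoidal

theorem cmp_ev {D₁ D₂ V : C} (ε₁ : V ⊗ D₁ ⟶ 𝟙_ C)
    (η₂ : 𝟙_ C ⟶ D₂ ⊗ V) (ε₂ : V ⊗ D₂ ⟶ 𝟙_ C)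
    (z2 : V ◁ η₂ ≫ (α_ V D₂ V).inv ≫ ε₂ ▷ V = (ρ_ V).hom ≫ (λ_ V).inv) :
    (V ◁ cmp η₂ ε₁) ≫ ε₂ = ε₁ := by
  dsimp only [cmp]
  calc (V ◁ ((λ_ D₁).inv ≫ (η₂ ▷ D₁) ≫ (α_ D₂ V D₁).hom ≫ (D₂ ◁ ε₁) ≫ (ρ_ D₂).hom)) ≫ ε₂
      = 𝟙 _ ⊗≫ (V ◁ (η₂ ▷ D₁)) ⊗≫ ((V ⊗ D₂) ◁ ε₁ ≫ ε₂ ▷ (𝟙_ C)) ⊗≫ 𝟙 _ := by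
        monoidal
    _ = 𝟙 _ ⊗≫ (V ◁ (η₂ ▷ D₁)) ⊗≫ (ε₂ ▷ (V ⊗ D₁) ≫ (𝟙_ C) ◁ ε₁) ⊗≫ 𝟙 _ := by
        rw [← whisker_exchange]
    _ = 𝟙 _ ⊗≫ ((V ◁ η₂ ≫ (α_ V D₂ V).inv ≫ ε₂ ▷ V) ▷ D₁) ⊗≫ ε₁ := by
        monoidal
    _ = 𝟙 _ ⊗≫ (((ρ_ V).hom ≫ (λ_ V).inv) ▷ D₁) ⊗≫ ε₁ := by rw [z2]
    _ = ε₁ := by monoidal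

variable (X : C) [HasRightDual X] [HasRightDual (Xᘁ : C)]

/-- The canonical morphism `X ⟶ Xᘁᘁ`. -/
noncomputable def dd : X ⟶ ((Xᘁ : C)ᘁ) :=
  cmp (η_ (Xᘁ) ((Xᘁ)ᘁ) ≫ (β_ ((Xᘁ)ᘁ) (Xᘁ)).inv) (ε_ X (Xᘁ))

theorem z2' : (Xᘁ : C) ◁ (η_ (Xᘁ) ((Xᘁ)ᘁ) ≫ (β_ ((Xᘁ)ᘁ) (Xᘁ)).inv) ≫
    (α_ (Xᘁ) ((Xᘁ)ᘁ) (Xᘁ)).inv ≫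
    (((β_ (Xᘁ) ((Xᘁ)ᘁ)).hom ≫ ε_ (Xᘁ) ((Xᘁ)ᘁ)) ▷ (Xᘁ)) =
    (ρ_ (Xᘁ : C)).hom ≫ (λ_ (Xᘁ : C)).inv :=
  (BraidedCategory.exactPairing_swap (Xᘁ : C) ((Xᘁ)ᘁ)).coevaluation_evaluation'

theorem dd_coev : η_ X (Xᘁ) ≫ (β_ X (Xᘁ)).hom ≫ ((Xᘁ) ◁ dd X) = η_ (Xᘁ) ((Xᘁ)ᘁ) := by
  have h := cmp_coev (η_ X (Xᘁ)) (ε_ X (Xᘁ))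
    (η_ (Xᘁ) ((Xᘁ)ᘁ) ≫ (β_ ((Xᘁ)ᘁ) (Xᘁ)).inv)
    (ExactPairing.coevaluation_evaluation X (Xᘁ))
  have h2 := congrArg (· ≫ (β_ ((Xᘁ)ᘁ) (Xᘁ)).hom) h
  simp only [Category.assoc, Iso.inv_hom_id, Category.comp_id] at h2
  rw [← h2, BraidedCategory.braiding_naturality_left]
  rfl

theorem dd_ev : ((Xᘁ : C) ◁ dd X) ≫ (β_ (Xᘁ) ((Xᘁ)ᘁ)).hom ≫ ε_ (Xᘁ) ((Xᘁ)ᘁ) =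
    ε_ X (Xᘁ) := by
  have h := cmp_ev (ε_ X (Xᘁ)) (η_ (Xᘁ) ((Xᘁ)ᘁ) ≫ (β_ ((Xᘁ)ᘁ) (Xᘁ)).inv)
    ((β_ (Xᘁ) ((Xᘁ)ᘁ)).hom ≫ ε_ (Xᘁ) ((Xᘁ)ᘁ)) (z2' X)
  exact h

/-- The key computation: the right partial braided trace on `Xᘁ` can be expressed using
the (mirror-braided) duality data `(η_X ≫ c, ε_X)` instead of `(η_{Xᘁ}, c ≫ ε_{Xᘁ})`. -/
theorem rptrace_eq {A B : C} (g : A ⊗ (Xᘁ) ⟶ B ⊗ (Xᘁ)) :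
    rptrace (Xᘁ) g = (ρ_ A).inv ≫ (A ◁ (η_ X (Xᘁ) ≫ (β_ X (Xᘁ)).hom)) ≫
      (α_ A (Xᘁ) X).inv ≫ (g ▷ X) ≫ (α_ B (Xᘁ) X).hom ≫ (B ◁ ε_ X (Xᘁ)) ≫ (ρ_ B).hom := by
  dsimp only [rptrace]
  calc (ρ_ A).inv ≫ (A ◁ η_ (Xᘁ) ((Xᘁ)ᘁ)) ≫ (α_ A (Xᘁ) ((Xᘁ)ᘁ)).inv ≫ (g ▷ ((Xᘁ)ᘁ)) ≫
        (α_ B (Xᘁ) ((Xᘁ)ᘁ)).hom ≫ (B ◁ (β_ (Xᘁ) ((Xᘁ)ᘁ)).hom) ≫ (B ◁ ε_ (Xᘁ) ((Xᘁ)ᘁ)) ≫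
        (ρ_ B).hom
      = 𝟙 _ ⊗≫ (A ◁ (η_ X (Xᘁ) ≫ (β_ X (Xᘁ)).hom ≫ ((Xᘁ) ◁ dd X))) ⊗≫ (g ▷ ((Xᘁ)ᘁ)) ⊗≫
        (B ◁ ((β_ (Xᘁ) ((Xᘁ)ᘁ)).hom ≫ ε_ (Xᘁ) ((Xᘁ)ᘁ))) ⊗≫ 𝟙 _ := by
        rw [dd_coev]; monoidal
    _ = 𝟙 _ ⊗≫ (A ◁ (η_ X (Xᘁ) ≫ (β_ X (Xᘁ)).hom)) ⊗≫
        ((A ⊗ (Xᘁ)) ◁ dd X ≫ g ▷ ((Xᘁ)ᘁ)) ⊗≫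
        (B ◁ ((β_ (Xᘁ) ((Xᘁ)ᘁ)).hom ≫ ε_ (Xᘁ) ((Xᘁ)ᘁ))) ⊗≫ 𝟙 _ := by
        monoidal
    _ = 𝟙 _ ⊗≫ (A ◁ (η_ X (Xᘁ) ≫ (β_ X (Xᘁ)).hom)) ⊗≫
        (g ▷ X ≫ (B ⊗ (Xᘁ)) ◁ dd X) ⊗≫
        (B ◁ ((β_ (Xᘁ) ((Xᘁ)ᘁ)).hom ≫ ε_ (Xᘁ) ((Xᘁ)ᘁ))) ⊗≫ 𝟙 _ := by
        rw [← whisker_exchange]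
    _ = 𝟙 _ ⊗≫ (A ◁ (η_ X (Xᘁ) ≫ (β_ X (Xᘁ)).hom)) ⊗≫ (g ▷ X) ⊗≫
        (B ◁ (((Xᘁ) ◁ dd X) ≫ (β_ (Xᘁ) ((Xᘁ)ᘁ)).hom ≫ ε_ (Xᘁ) ((Xᘁ)ᘁ))) ⊗≫ 𝟙 _ := by
        monoidal
    _ = 𝟙 _ ⊗≫ (A ◁ (η_ X (Xᘁ) ≫ (β_ X (Xᘁ)).hom)) ⊗≫ (g ▷ X) ⊗≫
        (B ◁ ε_ X (Xᘁ)) ⊗≫ 𝟙 _ := by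
        rw [dd_ev]
    _ = _ := by monoidal

end RptraceAux

/-- Lemma 4.4 of Shimizu–Wakui: for a morphism `f : X ⊗ Y ⟶ X ⊗ Z` in a left rigid braided
monoidal category `(C, c)`, with `j_{X,Y} : Yᘁ ⊗ Xᘁ ≅ (X ⊗ Y)ᘁ` the canonical isomorphisms
(characterized by `e_{X⊗Y} ∘ (j_{X,Y} ⊗ id) = e_Y ∘ (id ⊗ e_X ⊗ id)`), the right partial
braided trace of `j_{X,Y}⁻¹ ∘ ᵗf ∘ j_{X,Z}` on `Xᘁ` equals the left transpose of the left
partial braided trace of `f` on `X` computed with respect to the mirror braiding `c̄`. -/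
theorem rptrace_transpose {X Y Z : C} (f : X ⊗ Y ⟶ X ⊗ Z)
    (jXY : (Yᘁ : C) ⊗ (Xᘁ) ≅ ((X ⊗ Y)ᘁ))
    (hjXY : (jXY.hom ▷ (X ⊗ Y)) ≫ ε_ (X ⊗ Y) ((X ⊗ Y)ᘁ) =
      (α_ (Yᘁ) (Xᘁ) (X ⊗ Y)).hom ≫ ((Yᘁ) ◁ (α_ (Xᘁ) X Y).inv) ≫
        ((Yᘁ) ◁ (ε_ X (Xᘁ) ▷ Y)) ≫ ((Yᘁ) ◁ (λ_ Y).hom) ≫ ε_ Y (Yᘁ))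
    (jXZ : (Zᘁ : C) ⊗ (Xᘁ) ≅ ((X ⊗ Z)ᘁ))
    (hjXZ : (jXZ.hom ▷ (X ⊗ Z)) ≫ ε_ (X ⊗ Z) ((X ⊗ Z)ᘁ) =
      (α_ (Zᘁ) (Xᘁ) (X ⊗ Z)).hom ≫ ((Zᘁ) ◁ (α_ (Xᘁ) X Z).inv) ≫
        ((Zᘁ) ◁ (ε_ X (Xᘁ) ▷ Z)) ≫ ((Zᘁ) ◁ (λ_ Z).hom) ≫ ε_ Z (Zᘁ)) :
    rptrace (Xᘁ) (jXZ.hom ≫ (f)ᘁ ≫ jXY.inv) = (lptraceMirror X f)ᘁ := by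
  have h1 : ((f)ᘁ ▷ (X ⊗ Y)) ≫ ε_ (X ⊗ Y) ((X ⊗ Y)ᘁ) =
      (((X ⊗ Z)ᘁ : C) ◁ f) ≫ ε_ (X ⊗ Z) ((X ⊗ Z)ᘁ) := rightAdjointMate_comp_evaluation f
  have hB : ((jXZ.hom ≫ (f)ᘁ ≫ jXY.inv) ▷ (X ⊗ Y)) ≫ (α_ (Yᘁ) (Xᘁ) (X ⊗ Y)).hom ≫
      ((Yᘁ) ◁ (α_ (Xᘁ) X Y).inv) ≫ ((Yᘁ) ◁ (ε_ X (Xᘁ) ▷ Y)) ≫ ((Yᘁ) ◁ (λ_ Y).hom) ≫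
      ε_ Y (Yᘁ) =
      (((Zᘁ : C) ⊗ (Xᘁ)) ◁ f) ≫ (α_ (Zᘁ) (Xᘁ) (X ⊗ Z)).hom ≫
        ((Zᘁ) ◁ (α_ (Xᘁ) X Z).inv) ≫ ((Zᘁ) ◁ (ε_ X (Xᘁ) ▷ Z)) ≫
        ((Zᘁ) ◁ (λ_ Z).hom) ≫ ε_ Z (Zᘁ) := by
    calc ((jXZ.hom ≫ (f)ᘁ ≫ jXY.inv) ▷ (X ⊗ Y)) ≫ (α_ (Yᘁ) (Xᘁ) (X ⊗ Y)).hom ≫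
        ((Yᘁ) ◁ (α_ (Xᘁ) X Y).inv) ≫ ((Yᘁ) ◁ (ε_ X (Xᘁ) ▷ Y)) ≫ ((Yᘁ) ◁ (λ_ Y).hom) ≫
        ε_ Y (Yᘁ)
        = ((jXZ.hom ≫ (f)ᘁ ≫ jXY.inv) ▷ (X ⊗ Y)) ≫ (jXY.hom ▷ (X ⊗ Y)) ≫
          ε_ (X ⊗ Y) ((X ⊗ Y)ᘁ) := by rw [hjXY]
      _ = (jXZ.hom ▷ (X ⊗ Y)) ≫ ((f)ᘁ ▷ (X ⊗ Y)) ≫ ε_ (X ⊗ Y) ((X ⊗ Y)ᘁ) := by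
          rw [← comp_whiskerRight_assoc]
          simp only [Category.assoc, Iso.inv_hom_id, Category.comp_id, comp_whiskerRight]
      _ = (jXZ.hom ▷ (X ⊗ Y)) ≫ (((X ⊗ Z)ᘁ : C) ◁ f) ≫ ε_ (X ⊗ Z) ((X ⊗ Z)ᘁ) := by
          rw [h1]
      _ = (((Zᘁ : C) ⊗ (Xᘁ)) ◁ f) ≫ (jXZ.hom ▷ (X ⊗ Z)) ≫ ε_ (X ⊗ Z) ((X ⊗ Z)ᘁ) := by
          rw [← whisker_exchange_assoc]
      _ = _ := by rw [hjXZ]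
  have hinj : ∀ a b : (Zᘁ : C) ⟶ (Yᘁ : C),
      (a ▷ Y) ≫ ε_ Y (Yᘁ) = (b ▷ Y) ≫ ε_ Y (Yᘁ) → a = b := by
    intro a b h
    have h2 := congrArg (tensorRightHomEquiv (Zᘁ : C) Y (Yᘁ) (𝟙_ C)) h
    simp only [tensorRightHomEquiv_whiskerRight_comp_evaluation] at h2
    simpa using h2
  apply hinj
  rw [rightAdjointMate_comp_evaluation, RptraceAux.rptrace_eq X]
  calc (((ρ_ (Zᘁ : C)).inv ≫ ((Zᘁ : C) ◁ (η_ X (Xᘁ) ≫ (β_ X (Xᘁ)).hom)) ≫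
        (α_ (Zᘁ : C) (Xᘁ) X).inv ≫ ((jXZ.hom ≫ (f)ᘁ ≫ jXY.inv) ▷ X) ≫
        (α_ (Yᘁ : C) (Xᘁ) X).hom ≫ ((Yᘁ : C) ◁ ε_ X (Xᘁ)) ≫ (ρ_ (Yᘁ : C)).hom) ▷ Y) ≫
        ε_ Y (Yᘁ)
      = 𝟙 _ ⊗≫ ((Zᘁ : C) ◁ ((η_ X (Xᘁ) ≫ (β_ X (Xᘁ)).hom) ▷ Y)) ⊗≫
        (((jXZ.hom ≫ (f)ᘁ ≫ jXY.inv) ▷ (X ⊗ Y)) ≫ (α_ (Yᘁ) (Xᘁ) (X ⊗ Y)).hom ≫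
          ((Yᘁ) ◁ (α_ (Xᘁ) X Y).inv) ≫ ((Yᘁ) ◁ (ε_ X (Xᘁ) ▷ Y)) ≫ ((Yᘁ) ◁ (λ_ Y).hom) ≫
          ε_ Y (Yᘁ)) := by monoidal
    _ = 𝟙 _ ⊗≫ ((Zᘁ : C) ◁ ((η_ X (Xᘁ) ≫ (β_ X (Xᘁ)).hom) ▷ Y)) ⊗≫
        ((((Zᘁ : C) ⊗ (Xᘁ)) ◁ f) ≫ (α_ (Zᘁ) (Xᘁ) (X ⊗ Z)).hom ≫
          ((Zᘁ) ◁ (α_ (Xᘁ) X Z).inv) ≫ ((Zᘁ) ◁ (ε_ X (Xᘁ) ▷ Z)) ≫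
          ((Zᘁ) ◁ (λ_ Z).hom) ≫ ε_ Z (Zᘁ)) := by rw [hB]
    _ = ((Zᘁ : C) ◁ lptraceMirror X f) ≫ ε_ Z (Zᘁ) := by
        dsimp only [lptraceMirror]; monoidal
end
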